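/- Let {A_i}_{i ∈ Λ} be a nonempty family of commutative rings and let A = ∏_{i ∈ Λ} A_i be the product ring. Then A is a weakly Arf ring if and only if A_i is a weakly Arf ring for every i ∈ Λ. -/

import Mathlib

open scoped TensorProduct

/-- `A` is a *weakly Arf ring*: whenever `x, y, z ∈ A` with `x` a non-zerodivisor on `A`
and the fractions `y/x` and `z/x` in the total ring of fractions `Q(A)` are integral
over `A`, then `y * z ∈ x A`. -/
def IsWeaklyArfRing (A : Type*) [CommRing A] : Prop :=
  ∀ (x y z : A) (hx : x ∈ nonZeroDivisors A),
    IsIntegral A (IsLocalization.mk' (FractionRing A) y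
      (⟨x, hx⟩ : nonZeroDivisors A)) →
    IsIntegral A (IsLocalization.mk' (FractionRing A) z
      (⟨x, hx⟩ : nonZeroDivisors A)) →
    y * z ∈ Ideal.span {x}

open Finset Polynomial

section Char

variable {A : Type*} [CommRing A]

private lemma key_mul (x y : A) (hx : x ∈ nonZeroDivisors A) (n : ℕ) (a : ℕ → A) :
    (algebraMap A (FractionRing A) x) ^ n *
      ∑ k ∈ Finset.range (n + 1), algebraMap A (FractionRing A) (a k) *
        (IsLocalization.mk' (FractionRing A) y (⟨x, hx⟩ : nonZeroDivisors A)) ^ k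
    = algebraMap A (FractionRing A)
        (∑ k ∈ Finset.range (n + 1), a k * y ^ k * x ^ (n - k)) := by
  rw [map_sum, Finset.mul_sum]
  refine Finset.sum_congr rfl fun k hk => ?_
  have hk' : k ≤ n := Nat.lt_succ_iff.mp (Finset.mem_range.mp hk)
  have h1 : (IsLocalization.mk' (FractionRing A) y (⟨x, hx⟩ : nonZeroDivisors A)) ^ k *
      (algebraMap A (FractionRing A) x) ^ k = (algebraMap A (FractionRing A) y) ^ k := by
    rw [← mul_pow]
    congr 1
    exact IsLocalization.mk'_spec (FractionRing A) y (⟨x, hx⟩ : nonZeroDivisors A)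
  have hsplit : (algebraMap A (FractionRing A) x) ^ n
      = (algebraMap A (FractionRing A) x) ^ k * (algebraMap A (FractionRing A) x) ^ (n - k) := by
    rw [← pow_add, Nat.add_sub_cancel' hk']
  rw [hsplit, map_mul, map_mul, map_pow, map_pow]
  linear_combination (algebraMap A (FractionRing A) (a k) *
    (algebraMap A (FractionRing A) x) ^ (n - k)) * h1

/-- bump a relation's degree by one -/
private lemma rel_succ {x y : A} {n : ℕ} {a : ℕ → A}
    (h1 : a n = 1) (h2 : ∑ k ∈ Finset.range (n + 1), a k * y ^ k * x ^ (n - k) = 0) :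
    ∃ b : ℕ → A, b (n + 1) = 1 ∧
      ∑ k ∈ Finset.range (n + 2), b k * y ^ k * x ^ (n + 1 - k) = 0 := by
  refine ⟨fun k => if k = 0 then 0 else a (k - 1), by simp [h1], ?_⟩
  rw [Finset.sum_range_succ']
  simp only [reduceIte, if_pos rfl, zero_mul, add_zero, if_neg (Nat.succ_ne_zero _),
    Nat.add_sub_cancel]
  calc ∑ k ∈ Finset.range (n + 1), a k * y ^ (k + 1) * x ^ (n + 1 - (k + 1))
      = y * ∑ k ∈ Finset.range (n + 1), a k * y ^ k * x ^ (n - k) := by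
        rw [Finset.mul_sum]
        refine Finset.sum_congr rfl fun k hk => ?_
        have h3 : n + 1 - (k + 1) = n - k := by omega
        rw [h3]; ring
    _ = 0 := by rw [h2, mul_zero]

lemma isIntegral_mk'_iff (x y : A) (hx : x ∈ nonZeroDivisors A) :
    IsIntegral A (IsLocalization.mk' (FractionRing A) y (⟨x, hx⟩ : nonZeroDivisors A)) ↔
    ∃ n : ℕ, ∃ a : ℕ → A, a n = 1 ∧
      ∑ k ∈ Finset.range (n + 1), a k * y ^ k * x ^ (n - k) = 0 := by
  set t := IsLocalization.mk' (FractionRing A) y (⟨x, hx⟩ : nonZeroDivisors A) with ht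
  constructor
  · rintro ⟨p, hmonic, heval⟩
    refine ⟨p.natDegree, p.coeff, hmonic.coeff_natDegree, ?_⟩
    apply IsFractionRing.injective A (FractionRing A)
    rw [map_zero, ← key_mul x y hx p.natDegree p.coeff]
    have : ∑ k ∈ Finset.range (p.natDegree + 1),
        algebraMap A (FractionRing A) (p.coeff k) * t ^ k = 0 := by
      have h := Polynomial.aeval_eq_sum_range (R := A) (p := p) t
      rw [Polynomial.aeval_def, heval] at h
      calc ∑ k ∈ Finset.range (p.natDegree + 1), algebraMap A (FractionRing A) (p.coeff k) * t ^ k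
          = ∑ k ∈ Finset.range (p.natDegree + 1), p.coeff k • t ^ k :=
            Finset.sum_congr rfl fun k _ => (Algebra.smul_def _ _).symm
        _ = 0 := h.symm
    rw [this, mul_zero]
  · rintro ⟨n, a, h1, h2⟩
    obtain ⟨b, hb1, hb2⟩ := rel_succ h1 h2
    set m := n + 1 with hm
    refine ⟨X ^ m + ∑ k ∈ Finset.range m, C (b k) * X ^ k, ?_, ?_⟩
    · apply Polynomial.monic_X_pow_add
      refine lt_of_le_of_lt (Polynomial.degree_sum_le _ _) ?_
      have hbot : (⊥ : WithBot ℕ) < ((m : ℕ) : WithBot ℕ) := by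
        exact_mod_cast WithBot.bot_lt_coe m
      rw [Finset.sup_lt_iff hbot]
      intro k hk
      refine lt_of_le_of_lt (Polynomial.degree_C_mul_X_pow_le _ _) ?_
      exact_mod_cast Finset.mem_range.mp hk
    · have hu : IsUnit ((algebraMap A (FractionRing A) x) ^ m) :=
        (IsLocalization.map_units (FractionRing A) (⟨x, hx⟩ : nonZeroDivisors A)).pow m
      apply hu.mul_left_cancel
      rw [mul_zero, ← Polynomial.aeval_def, map_add, map_sum, Polynomial.aeval_X_pow]
      have hsum : t ^ m + ∑ k ∈ Finset.range m, (Polynomial.aeval t) (C (b k) * X ^ k)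
          = ∑ k ∈ Finset.range (m + 1), algebraMap A (FractionRing A) (b k) * t ^ k := by
        rw [Finset.sum_range_succ (fun k => algebraMap A (FractionRing A) (b k) * t ^ k) m,
          hb1, map_one, one_mul, add_comm]
        congr 1
        exact Finset.sum_congr rfl fun k _ => by
          rw [map_mul, Polynomial.aeval_C, Polynomial.aeval_X_pow]
      rw [hsum, key_mul x y hx m b, hb2, map_zero]

end Char

section Pi

variable {ι : Type*} {A : ι → Type*} [∀ i, CommRing (A i)]

lemma pi_mem_nonZeroDivisors_iff (x : ∀ i, A i) :
    x ∈ nonZeroDivisors (∀ i, A i) ↔ ∀ i, x i ∈ nonZeroDivisors (A i) := by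
  classical
  constructor
  · intro hx i; rw [mem_nonZeroDivisors_iff_right] at hx ⊢; intro c hc
    have h0 : Function.update (0 : ∀ i, A i) i c * x = 0 := by
      funext j
      by_cases hj : j = i
      · subst hj; simp [hc]
      · simp [Function.update_of_ne hj]
    have := hx _ h0
    have : Function.update (0 : ∀ i, A i) i c i = 0 := by rw [this]; rfl
    simpa using this
  · intro hx; rw [mem_nonZeroDivisors_iff_right]; intro c hc
    funext i
    exact mem_nonZeroDivisors_iff_right.mp (hx i) (c i) (congrFun hc i)

end Pi

/-- A product `A = ∏ᵢ Aᵢ` of a nonempty family of commutative rings is weakly Arf iff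
every `Aᵢ` is weakly Arf. -/
theorem weaklyArf_pi (ι : Type*) [Nonempty ι] (A : ι → Type*)
    [∀ i, CommRing (A i)] :
    IsWeaklyArfRing (∀ i, A i) ↔ ∀ i, IsWeaklyArfRing (A i) := by
  classical
  constructor
  · intro H i x y z hx hy hz
    set X : ∀ j, A j := Function.update (1 : ∀ j, A j) i x with hXdef
    have hXi : X i = x := Function.update_self i x 1
    have hXnzd : X ∈ nonZeroDivisors (∀ j, A j) := by
      rw [pi_mem_nonZeroDivisors_iff]
      intro j
      by_cases hj : j = i
      · subst hj; simpa [hXdef] using hx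
      · rw [hXdef, Function.update_of_ne hj]
        exact one_mem _
    -- helper: lift integrality from component i to the product
    have build : ∀ (w : A i),
        IsIntegral (A i) (IsLocalization.mk' (FractionRing (A i)) w
          (⟨x, hx⟩ : nonZeroDivisors (A i))) →
        IsIntegral (∀ j, A j) (IsLocalization.mk' (FractionRing (∀ j, A j))
          (Function.update (0 : ∀ j, A j) i w)
          (⟨X, hXnzd⟩ : nonZeroDivisors (∀ j, A j))) := by
      intro w hw
      rw [isIntegral_mk'_iff] at hw ⊢
      obtain ⟨n, a, ha1, ha2⟩ := hw
      obtain ⟨b, hb1, hb2⟩ := rel_succ ha1 ha2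
      refine ⟨n + 1, fun k => Function.update
        (if k = n + 1 then (1 : ∀ j, A j) else 0) i (b k), ?_, ?_⟩
      · funext j
        by_cases hj : j = i
        · subst hj; simpa using hb1
        · simp [Function.update_of_ne hj]
      · funext j
        rw [Finset.sum_apply]
        by_cases hj : j = i
        · subst hj
          simpa [hXi] using hb2
        · rw [Pi.zero_apply]
          refine Finset.sum_eq_zero fun k hk => ?_
          simp only [Pi.mul_apply, Pi.pow_apply, Function.update_of_ne hj]
          rcases Nat.eq_zero_or_pos k with hk0 | hk0
          · subst hk0
            have : ¬ (0 = n + 1) := by omega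
            simp [this]
          · simp [zero_pow (Nat.pos_iff_ne_zero.mp hk0)]
    have hYint := build y hy
    have hZint := build z hz
    have := H X (Function.update 0 i y) (Function.update 0 i z) hXnzd hYint hZint
    obtain ⟨T, hT⟩ := Ideal.mem_span_singleton.mp this
    have hTi := congrFun hT i
    simp only [Pi.mul_apply, Function.update_self] at hTi
    rw [hXi] at hTi
    exact Ideal.mem_span_singleton.mpr ⟨T i, hTi⟩
  · intro H x y z hx hy hz
    rw [isIntegral_mk'_iff] at hy hz
    obtain ⟨n, a, ha1, ha2⟩ := hy
    obtain ⟨m, c, hc1, hc2⟩ := hz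
    have hx' : ∀ i, x i ∈ nonZeroDivisors (A i) := (pi_mem_nonZeroDivisors_iff x).mp hx
    have hdvd : ∀ i, x i ∣ y i * z i := by
      intro i
      refine Ideal.mem_span_singleton.mp (H i (x i) (y i) (z i) (hx' i) ?_ ?_)
      · rw [isIntegral_mk'_iff]
        refine ⟨n, fun k => a k i, congrFun ha1 i, ?_⟩
        have := congrFun ha2 i
        rw [Finset.sum_apply] at this
        simpa using this
      · rw [isIntegral_mk'_iff]
        refine ⟨m, fun k => c k i, congrFun hc1 i, ?_⟩
        have := congrFun hc2 i
        rw [Finset.sum_apply] at this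
        simpa using this
    choose t ht using hdvd
    exact Ideal.mem_span_singleton.mpr ⟨t, funext fun i => ht i⟩
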